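/- Let F be a temporal forest of rooted trees with successor forest 𝓕(λ). Suppose vertices u, v satisfy v = p(p(u)). Let (ℓ₀,x₀)=(ℓ,u),(ℓ₁,x₁),…,(ℓ_k,x_k) be the maximal path of red (intra-block, weight-0) edges in 𝓕 starting from (ℓ,u) and proceeding towards ancestors. Then for every 0 ≤ i ≤ k, EA(x_i, v, ℓ_i) = EA(x_k, v, ℓ_k). -/
import Mathlib


open scoped Classical

/-- Embedding of `ℤ` into `EReal`. -/
def iE (n : ℤ) : EReal := ((n : ℝ) : EReal)

/-- `succ t X` : the minimum element of `X ⊆ ℤ` that is `≥ t`, or `+∞` if none. -/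
noncomputable def eSucc (t : EReal) (X : Set ℤ) : EReal :=
  sInf {y : EReal | ∃ x ∈ X, y = iE x ∧ t ≤ iE x}

/-- The lexicographic order on the nodes `(ℓ, u)` of the successor forest:
first by label, then by a fixed total order on vertices. -/
def NLt {V : Type} [LinearOrder V] (a b : ℤ × V) : Prop :=
  a.1 < b.1 ∨ (a.1 = b.1 ∧ a.2 < b.2)

/-- The block `𝓑_v` of a vertex `v` in a rooted forest given by the parent map
`par` (with `par r = none` for roots) and labels `lam u = λ(e_u)`:
all nodes `(ℓ, u)` with `p(u) = v` and `ℓ ∈ λ(e_u)`. -/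
def Block {V : Type} (par : V → Option V) (lam : V → Set ℤ) (v : V) :
    Set (ℤ × V) :=
  {x | par x.2 = some v ∧ x.1 ∈ lam x.2}

/-- `y` is the strict successor of `x` in `B` (w.r.t. the lexicographic order). -/
def IsStrictSucc {V : Type} [LinearOrder V] (B : Set (ℤ × V)) (x y : ℤ × V) : Prop :=
  y ∈ B ∧ NLt x y ∧ ∀ z ∈ B, NLt x z → (y = z ∨ NLt y z)

/-- `q = succ(ℓ, S)`: the minimum element of `S` that is `≥ ℓ` (finite case). -/
def IsSucc (S : Set ℤ) (ℓ q : ℤ) : Prop :=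
  q ∈ S ∧ ℓ ≤ q ∧ ∀ r ∈ S, ℓ ≤ r → q ≤ r

/-- `SigmaParent par lam x y` : `y = σ_{x.2}(x.1, λ)`, the parent of the node
`x = (ℓ, u)` in the successor forest `𝓕(λ)`.  With `v = p(u)`: if `v` is a root,
`σ_u(ℓ)` is the strict successor of `(ℓ, u)` in `𝓑_v`; otherwise, with
`ℓ' = succ(ℓ, λ(e_v))` and `(ℓ⁺, u⁺)` the strict successor of `(ℓ, u)` in `𝓑_v`:
`σ_u(ℓ) = (ℓ⁺, u⁺)` if it exists and `ℓ⁺ ≤ ℓ'` (vacuous if `ℓ' = +∞`), and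
`σ_u(ℓ) = (ℓ', v)` if `ℓ' < ℓ⁺` (or no strict successor exists) and `ℓ' < +∞`. -/
def SigmaParent {V : Type} [LinearOrder V] (par : V → Option V)
    (lam : V → Set ℤ) (x y : ℤ × V) : Prop :=
  ∃ v, par x.2 = some v ∧ x.1 ∈ lam x.2 ∧
    ((IsStrictSucc (Block par lam v) x y ∧
        (par v = none ∨ ∀ q : ℤ, IsSucc (lam v) x.1 q → y.1 ≤ q)) ∨
      (par v ≠ none ∧ y.2 = v ∧ IsSucc (lam v) x.1 y.1 ∧
        ∀ z : ℤ × V, IsStrictSucc (Block par lam v) x z → y.1 < z.1))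

/-- An upward temporal path from `u` to an ancestor `v`, with departure and
arrival times: a selection of a label on each edge of the path `u, p(u), …, v`,
with non-decreasing labels. -/
inductive UpJourney {V : Type} (par : V → Option V) (lam : V → Set ℤ) :
    V → V → ℤ → ℤ → Prop
  | single {u v : V} {ℓ : ℤ} : par u = some v → ℓ ∈ lam u →
      UpJourney par lam u v ℓ ℓ
  | cons {u x v : V} {ℓ dep arr : ℤ} : par u = some x → ℓ ∈ lam u → ℓ ≤ dep →
      UpJourney par lam x v dep arr → UpJourney par lam u v ℓ arr

/-- Earliest arrival time of a temporal path from `u` to its ancestor `v`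
departing no earlier than `t`; `+∞` (`sInf ∅`) if no such path exists. -/
noncomputable def uEA {V : Type} (par : V → Option V) (lam : V → Set ℤ)
    (u v : V) (t : EReal) : EReal :=
  sInf {a : EReal | ∃ dep arr : ℤ,
    UpJourney par lam u v dep arr ∧ t ≤ iE dep ∧ a = iE arr}

private lemma wf_irrefl {α} {r : α → α → Prop} (h : WellFounded r) : ∀ a, ¬ r a a := by
  intro a
  induction a using WellFounded.induction h with
  | _ a ih => exact fun hr => ih a hr hr

private lemma upJourney_transGen {V : Type} {par : V → Option V} {lam : V → Set ℤ}
    {a b : V} {dep arr : ℤ} (h : UpJourney par lam a b dep arr) :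
    Relation.TransGen (fun p c => par c = some p) b a := by
  induction h with
  | single h _ => exact Relation.TransGen.single h
  | cons h _ _ _ ih => exact ih.tail h

private lemma iE_le_iff {a b : ℤ} : iE a ≤ iE b ↔ a ≤ b := by
  unfold iE; exact_mod_cast Iff.rfl

/-- Inversion for journeys of depth exactly two. -/
private lemma journey_shape {V : Type} {par : V → Option V} {lam : V → Set ℤ}
    (hwf : WellFounded fun a b : V => par b = some a)
    {w x v : V} {dep arr : ℤ} (hw : par w = some x) (hx : par x = some v)
    (h : UpJourney par lam w v dep arr) :
    dep ∈ lam w ∧ arr ∈ lam x ∧ dep ≤ arr := by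
  cases h with
  | single h hmem =>
    rw [hw] at h
    obtain rfl : x = v := by injection h
    exact absurd hx (wf_irrefl hwf x)
  | cons h hmem hle h2 =>
    rw [hw] at h
    obtain rfl : x = _ := by injection h
    cases h2 with
    | single h' hmem' => exact ⟨hmem, hmem', hle⟩
    | cons h' hmem' hle' h3 =>
      rw [hx] at h'
      obtain rfl : v = _ := by injection h'
      exact absurd (upJourney_transGen h3) (wf_irrefl hwf.transGen v)

/-- The set of arrival times reachable from `w` (with `p(w) = x`, `p(x) = v`)
departing no earlier than `t ∈ lam w`. -/
private lemma uEA_two_step {V : Type} {par : V → Option V} {lam : V → Set ℤ}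
    (hwf : WellFounded fun a b : V => par b = some a)
    {w x v : V} (hw : par w = some x) (hx : par x = some v)
    {t : ℤ} (ht : t ∈ lam w) :
    uEA par lam w v (iE t) = sInf {a : EReal | ∃ m : ℤ, m ∈ lam x ∧ t ≤ m ∧ a = iE m} := by
  unfold uEA
  congr 1
  ext a
  constructor
  · rintro ⟨dep, arr, hj, hdep, rfl⟩
    obtain ⟨hd, hm, hle⟩ := journey_shape hwf hw hx hj
    exact ⟨arr, hm, le_trans (iE_le_iff.mp hdep) hle, rfl⟩
  · rintro ⟨m, hm, hle, rfl⟩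
    exact ⟨t, m, UpJourney.cons hw ht hle (UpJourney.single hx hm), le_refl _, rfl⟩

/-- One red-edge step preserves the infimum. -/
private lemma sInf_step {S : Set ℤ} {ℓ₀ ℓ₁ : ℤ} (h01 : ℓ₀ ≤ ℓ₁)
    (hsucc : ∀ q : ℤ, IsSucc S ℓ₀ q → ℓ₁ ≤ q) :
    sInf {a : EReal | ∃ m : ℤ, m ∈ S ∧ ℓ₀ ≤ m ∧ a = iE m} =
      sInf {a : EReal | ∃ m : ℤ, m ∈ S ∧ ℓ₁ ≤ m ∧ a = iE m} := by
  apply le_antisymm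
  · apply le_sInf
    rintro a ⟨m, hm, hle, rfl⟩
    exact sInf_le ⟨m, hm, le_trans h01 hle, rfl⟩
  · apply le_sInf
    rintro a ⟨m, hm, hle, rfl⟩
    obtain ⟨q, ⟨hqS, hq0⟩, hqmin⟩ :=
      Int.exists_least_of_bdd (P := fun z => z ∈ S ∧ ℓ₀ ≤ z)
        ⟨ℓ₀, fun z hz => hz.2⟩ ⟨m, hm, hle⟩
    have hq1 : ℓ₁ ≤ q := hsucc q ⟨hqS, hq0, fun r hr hle' => hqmin r ⟨hr, hle'⟩⟩
    have hqm : q ≤ m := hqmin m ⟨hm, hle⟩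
    exact le_trans (sInf_le ⟨q, hqS, hq1, rfl⟩) (iE_le_iff.mpr hqm)

/-- Let `v = p(p(u))` and let `(ℓ₀, x₀) = (ℓ, u), (ℓ₁, x₁), …, (ℓ_k, x_k)` be the
maximal path of red (intra-block) edges in the successor forest `𝓕` starting from
`(ℓ, u)`.  Then `EA(x_i, v, ℓ_i) = EA(x_k, v, ℓ_k)` for every `0 ≤ i ≤ k`. -/
theorem uEA_constant_on_red_path {V : Type} [LinearOrder V]
    (par : V → Option V) (lam : V → Set ℤ)
    (hwf : WellFounded fun a b : V => par b = some a)
    (u x v : V) (hpu : par u = some x) (hpx : par x = some v)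
    (ℓ : ℤ) (hℓ : ℓ ∈ lam u) (k : ℕ) (nodes : ℕ → ℤ × V)
    (h0 : nodes 0 = (ℓ, u))
    (hred : ∀ i < k, SigmaParent par lam (nodes i) (nodes (i + 1)) ∧
      par (nodes (i + 1)).2 = par (nodes i).2)
    (hmax : ¬ ∃ y : ℤ × V, SigmaParent par lam (nodes k) y ∧
      par y.2 = par (nodes k).2) :
    ∀ i ≤ k, uEA par lam (nodes i).2 v (iE (nodes i).1) =
      uEA par lam (nodes k).2 v (iE (nodes k).1) := by
  -- Invariant: every node on the path lies in the block of `x`.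
  have inv : ∀ i ≤ k, par (nodes i).2 = some x ∧ (nodes i).1 ∈ lam (nodes i).2 := by
    intro i
    induction i with
    | zero => intro _; rw [h0]; exact ⟨hpu, hℓ⟩
    | succ i ih =>
      intro hik
      have hi : i < k := hik
      obtain ⟨hpar, _⟩ := ih (le_of_lt hi)
      obtain ⟨hsp, hpe⟩ := hred i hi
      obtain ⟨v', hv', hmem', hdisj⟩ := hsp
      rw [hpar] at hv'
      obtain rfl : x = v' := by injection hv'
      rcases hdisj with ⟨hss, _⟩ | ⟨_, heq, _, _⟩
      · exact ⟨hss.1.1, hss.1.2⟩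
      · have : par (nodes (i + 1)).2 = some x := hpe.trans hpar
        rw [heq] at this
        exact absurd this (wf_irrefl hwf x)
  -- Extract the red-edge data for each step.
  have step : ∀ i < k, (nodes i).1 ≤ (nodes (i + 1)).1 ∧
      ∀ q : ℤ, IsSucc (lam x) (nodes i).1 q → (nodes (i + 1)).1 ≤ q := by
    intro i hi
    obtain ⟨hpar, _⟩ := inv i (le_of_lt hi)
    obtain ⟨hsp, hpe⟩ := hred i hi
    obtain ⟨v', hv', hmem', hdisj⟩ := hsp
    rw [hpar] at hv'
    obtain rfl : x = v' := by injection hv'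
    rcases hdisj with ⟨hss, hor⟩ | ⟨_, heq, _, _⟩
    · have hle : (nodes i).1 ≤ (nodes (i + 1)).1 := by
        rcases hss.2.1 with h | ⟨h, _⟩
        · exact le_of_lt h
        · exact le_of_eq h
      rcases hor with hnone | hq
      · rw [hpx] at hnone; exact absurd hnone (Option.some_ne_none v)
      · exact ⟨hle, hq⟩
    · have : par (nodes (i + 1)).2 = some x := hpe.trans hpar
      rw [heq] at this
      exact absurd this (wf_irrefl hwf x)
  -- Rewrite `uEA` as the infimum over labels of `x`.
  have key : ∀ i ≤ k, uEA par lam (nodes i).2 v (iE (nodes i).1) =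
      sInf {a : EReal | ∃ m : ℤ, m ∈ lam x ∧ (nodes i).1 ≤ m ∧ a = iE m} := by
    intro i hi
    exact uEA_two_step hwf (inv i hi).1 hpx (inv i hi).2
  -- Chain the per-edge equalities.
  have chain : ∀ d : ℕ, ∀ i : ℕ, i + d = k →
      sInf {a : EReal | ∃ m : ℤ, m ∈ lam x ∧ (nodes i).1 ≤ m ∧ a = iE m} =
      sInf {a : EReal | ∃ m : ℤ, m ∈ lam x ∧ (nodes k).1 ≤ m ∧ a = iE m} := by
    intro d
    induction d with
    | zero => intro i h; rw [Nat.add_zero] at h; rw [h]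
    | succ d ih =>
      intro i h
      have hi : i < k := by omega
      obtain ⟨h1, h2⟩ := step i hi
      rw [sInf_step h1 h2]
      exact ih (i + 1) (by omega)
  intro i hi
  rw [key i hi, key k le_rfl]
  exact chain (k - i) i (by omega)
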